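/- Let X be a compact metric space, let S ⊆ C(ℝ,X) be a nonempty shift-invariant set satisfying the compactness axiom, and let μ be an invariant measure of S. Then the closure of the set of recurrent points of S, i.e., the set closure({x ∈ X : x ∈ ω_S(x)}), has full measure: μ(closure({x ∈ X : x ∈ ω_S(x)})) = 1. -/
import Mathlib


open Set Filter Topology MeasureTheory

namespace AxODE

variable {X : Type*} [MetricSpace X]

/-- The shift map `σ(t, φ)(s) = φ(s + t)` on `C(ℝ, X)`. -/
def shift (t : ℝ) (φ : C(ℝ, X)) : C(ℝ, X) :=
  ⟨fun s => φ (s + t), φ.continuous.comp (continuous_add_right t)⟩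

/-- `S` is shift-invariant if `σ(t, φ) ∈ S` for all `t ∈ ℝ` and `φ ∈ S`. -/
def ShiftInvariant (S : Set C(ℝ, X)) : Prop :=
  ∀ (t : ℝ), ∀ φ ∈ S, shift t φ ∈ S

/-- The evaluation map `e_S : ℝ × S → ℝ × X`, `e_S(t, φ) = (t, φ(t))`. -/
def evalMap (S : Set C(ℝ, X)) : ℝ × S → ℝ × X :=
  fun p => (p.1, (p.2 : C(ℝ, X)) p.1)

/-- `S` satisfies the compactness axiom if `e_S` is proper, i.e. the preimage under `e_S`
of every compact subset of `ℝ × X` is compact. -/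
def CompactnessAxiom (S : Set C(ℝ, X)) : Prop :=
  ∀ K : Set (ℝ × X), IsCompact K → IsCompact (evalMap S ⁻¹' K)

/-- `ω(B) = ⋂_{t>0} closure (⋃_{s ≥ t} σ(s, B))`, taken in `C(ℝ, X)`. -/
def omegaSet (B : Set C(ℝ, X)) : Set C(ℝ, X) :=
  ⋂ t ∈ Set.Ioi (0 : ℝ), closure (⋃ s ∈ Set.Ici t, shift s '' B)

/-- `ω_S(x) = π(ω(S_x))` where `S_x = {φ ∈ S : φ(0) = x}`. -/
def omegaS (S : Set C(ℝ, X)) (x : X) : Set X :=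
  (fun φ : C(ℝ, X) => φ 0) '' omegaSet {φ ∈ S | φ 0 = x}

theorem shift_shift (t u : ℝ) (φ : C(ℝ, X)) : shift t (shift u φ) = shift (u + t) φ := by
  ext s; simp only [shift, ContinuousMap.coe_mk]; ring_nf

theorem shift_iterate (n : ℕ) (φ : C(ℝ, X)) : (shift (1 : ℝ))^[n] φ = shift (n : ℝ) φ := by
  induction n with
  | zero => ext s; simp [shift]
  | succ n ih =>
      rw [Function.iterate_succ_apply', ih, shift_shift]
      norm_num

theorem continuous_shift (t : ℝ) : Continuous (shift (X := X) t) := by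
  have : shift (X := X) t
      = fun φ : C(ℝ, X) => φ.comp ⟨fun s => s + t, continuous_add_right t⟩ := rfl
  rw [this]
  exact ContinuousMap.continuous_precomp _

theorem closure_recurrent_full_measure [CompactSpace X]
    [MeasurableSpace X] [BorelSpace X]
    [MeasurableSpace C(ℝ, X)] [BorelSpace C(ℝ, X)]
    (S : Set C(ℝ, X)) (hne : S.Nonempty) (hS : ShiftInvariant S)
    (hcpt : CompactnessAxiom S)
    (μ : Measure X)
    (hμ : ∃ ν : Measure C(ℝ, X), IsProbabilityMeasure ν ∧ ν S = 1 ∧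
      (∀ t : ℝ, Measure.map (shift t) ν = ν) ∧
      μ = Measure.map (fun φ : C(ℝ, X) => φ 0) ν) :
    μ (closure {x : X | x ∈ omegaS S x}) = 1 := by
  obtain ⟨ν, hprob, hνS, hinv, rfl⟩ := hμ
  have hmp : MeasurePreserving (shift (1 : ℝ)) ν ν :=
    ⟨(continuous_shift 1).measurable, hinv 1⟩
  have hcons : Conservative (shift (1 : ℝ)) ν := hmp.conservative
  have hae : ∀ᵐ φ ∂ν, ∀ s ∈ 𝓝 φ, ∃ᶠ n in atTop, (shift (1 : ℝ))^[n] φ ∈ s :=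
    hcons.ae_frequently_mem_of_mem_nhds
  set A : Set C(ℝ, X) :=
    {φ | ∀ s ∈ 𝓝 φ, ∃ᶠ n in atTop, (shift (1 : ℝ))^[n] φ ∈ s} with hA
  -- every φ ∈ S ∩ A yields a recurrent point φ 0
  have key : ∀ φ ∈ S ∩ A, φ 0 ∈ omegaS S (φ 0) := by
    rintro φ ⟨hφS, hφA⟩
    refine ⟨φ, ?_, rfl⟩
    simp only [omegaSet, mem_iInter]
    intro t ht
    rw [mem_closure_iff_nhds]
    intro U hU
    obtain ⟨n, hnU, hnt⟩ :=
      ((hφA U hU).and_eventually (eventually_ge_atTop ⌈t⌉₊)).exists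
    refine ⟨(shift (1 : ℝ))^[n] φ, hnU, ?_⟩
    rw [shift_iterate]
    have hnt' : t ≤ (n : ℝ) := (Nat.le_ceil t).trans (by exact_mod_cast hnt)
    exact mem_biUnion hnt' ⟨φ, ⟨hφS, rfl⟩, rfl⟩
  set R : Set X := closure {x : X | x ∈ omegaS S x} with hR
  have hπ : Measurable fun φ : C(ℝ, X) => φ 0 :=
    (continuous_eval_const 0).measurable
  rw [Measure.map_apply hπ isClosed_closure.measurableSet]
  set U : Set C(ℝ, X) := (fun φ : C(ℝ, X) => φ 0) ⁻¹' R with hU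
  have hA0 : ν Aᶜ = 0 := mem_ae_iff.mp hae
  have hSA : (1 : ENNReal) ≤ ν (S ∩ A) := by
    calc (1 : ENNReal) = ν S := hνS.symm
      _ ≤ ν ((S ∩ A) ∪ Aᶜ) := by
          refine measure_mono fun φ hφ => ?_
          by_cases h : φ ∈ A
          · exact Or.inl ⟨hφ, h⟩
          · exact Or.inr h
      _ ≤ ν (S ∩ A) + ν Aᶜ := measure_union_le _ _
      _ = ν (S ∩ A) := by rw [hA0, add_zero]
  have hsub : S ∩ A ⊆ U := fun φ hφ => subset_closure (key φ hφ)
  exact le_antisymm prob_le_one (hSA.trans (measure_mono hsub))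

end AxODE
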